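/- arXiv:1404.7386 — 2 statements merged into one kernel-verified Lean document; each statement's English description precedes it below -/
import Mathlib

section
/- Let M be a finitely generated free module over ℋ and let A and B be two ℋ-submodules of M. Assume that the natural maps A/XA → M/XM and B/XB → M/XM (induced by the inclusions of A and B into M) are both injective, and that the images of A/XA and of B/XB inside M/XM intersect trivially (i.e. (A + XM) ∩ (B + XM) ⊆ XM). Then A ∩ B = {0}. -/
/-!
Statement 0.  `ℋ` is the ring of power series over `E` (a finite extension of `ℚ_p`
with its canonical absolute value) converging on the open `p`-adic unit disc.
If `M` is a finitely generated free `ℋ`-module and `A`, `B` are two `ℋ`-submodules of `M`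
such that the natural maps `A/XA → M/XM` and `B/XB → M/XM` are injective
(equivalently `A ∩ XM = XA` and `B ∩ XM = XB`) and the images of `A/XA` and `B/XB`
in `M/XM` intersect trivially (i.e. `(A + XM) ∩ (B + XM) ⊆ XM`), then `A ∩ B = 0`.
-/

open Filter PowerSeries Pointwise

/-- The ring `ℋ` of power series with coefficients in `E` that converge on the open
`p`-adic unit disc: all `f = ∑ aₙ Xⁿ` such that for every `0 ≤ r < 1` one has
`‖aₙ‖ * rⁿ → 0` as `n → ∞`. -/
noncomputable def Hcal (E : Type) [NormedField E] [IsUltrametricDist E] :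
    Subring (PowerSeries E) where
  carrier := {f | ∀ r : ℝ, 0 ≤ r → r < 1 →
    Tendsto (fun n : ℕ => ‖(PowerSeries.coeff (R := E) n) f‖ * r ^ n) atTop (nhds 0)}
  zero_mem' := by
    intro r hr hr1
    simp only [map_zero, norm_zero, zero_mul]
    exact tendsto_const_nhds
  one_mem' := by
    intro r hr hr1
    refine Tendsto.congr' ?_ (tendsto_const_nhds : Tendsto (fun _ : ℕ => (0 : ℝ)) atTop (nhds 0))
    filter_upwards [eventually_ge_atTop 1] with n hn
    rw [PowerSeries.coeff_one]
    simp [Nat.one_le_iff_ne_zero.mp hn]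
  add_mem' := by
    intro f g hf hg r hr hr1
    have h := (hf r hr hr1).add (hg r hr hr1)
    rw [add_zero] at h
    refine squeeze_zero (fun n => by positivity) (fun n => ?_) h
    rw [map_add]
    calc ‖(PowerSeries.coeff (R := E) n) f + (PowerSeries.coeff (R := E) n) g‖ * r ^ n
        ≤ (‖(PowerSeries.coeff (R := E) n) f‖ + ‖(PowerSeries.coeff (R := E) n) g‖) * r ^ n := by
          gcongr
          exact norm_add_le _ _
      _ = ‖(PowerSeries.coeff (R := E) n) f‖ * r ^ n + ‖(PowerSeries.coeff (R := E) n) g‖ * r ^ n := by ring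
  neg_mem' := by
    intro f hf r hr hr1
    simpa using hf r hr hr1
  mul_mem' := by
    intro f g hf hg r hr hr1
    obtain ⟨s, hrs, hs1⟩ : ∃ s : ℝ, r < s ∧ s < 1 := ⟨(r + 1) / 2, by linarith, by linarith⟩
    have hs0 : 0 < s := lt_of_le_of_lt hr hrs
    obtain ⟨Ca, hCa⟩ := (hf s hs0.le hs1).bddAbove_range
    obtain ⟨Cb, hCb⟩ := (hg s hs0.le hs1).bddAbove_range
    have hCa' : ∀ n : ℕ, ‖(PowerSeries.coeff (R := E) n) f‖ * s ^ n ≤ Ca :=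
      fun n => hCa (Set.mem_range_self n)
    have hCb' : ∀ n : ℕ, ‖(PowerSeries.coeff (R := E) n) g‖ * s ^ n ≤ Cb :=
      fun n => hCb (Set.mem_range_self n)
    have hCa0 : 0 ≤ Ca := le_trans (by positivity) (hCa' 0)
    have hCb0 : 0 ≤ Cb := le_trans (by positivity) (hCb' 0)
    have hlim : Tendsto (fun n : ℕ => Ca * Cb * (r / s) ^ n) atTop (nhds 0) := by
      have h := tendsto_pow_atTop_nhds_zero_of_lt_one (by positivity)
        ((div_lt_one hs0).mpr hrs)
      simpa using h.const_mul (Ca * Cb)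
    refine squeeze_zero (fun n => by positivity) (fun n => ?_) hlim
    have hbound : ‖(PowerSeries.coeff (R := E) n) (f * g)‖ ≤ Ca * Cb / s ^ n := by
      rw [PowerSeries.coeff_mul]
      refine IsUltrametricDist.norm_sum_le_of_forall_le_of_nonneg (by positivity) ?_
      rintro ⟨i, j⟩ hij
      replace hij : i + j = n := by simpa using hij
      rw [norm_mul]
      have h1 : ‖(PowerSeries.coeff (R := E) i) f‖ ≤ Ca / s ^ i :=
        (le_div_iff₀ (by positivity)).mpr (hCa' i)
      have h2 : ‖(PowerSeries.coeff (R := E) j) g‖ ≤ Cb / s ^ j :=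
        (le_div_iff₀ (by positivity)).mpr (hCb' j)
      calc ‖(PowerSeries.coeff (R := E) i) f‖ * ‖(PowerSeries.coeff (R := E) j) g‖
          ≤ (Ca / s ^ i) * (Cb / s ^ j) :=
            mul_le_mul h1 h2 (norm_nonneg _) (by positivity)
        _ = Ca * Cb / s ^ (i + j) := by rw [pow_add]; ring
        _ = Ca * Cb / s ^ n := by rw [hij]
    calc ‖(PowerSeries.coeff (R := E) n) (f * g)‖ * r ^ n
        ≤ (Ca * Cb / s ^ n) * r ^ n := by gcongr
      _ = Ca * Cb * (r / s) ^ n := by rw [div_pow]; ring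

set_option synthInstance.maxHeartbeats 1000000 in
set_option maxHeartbeats 2000000 in
/-- **Lemma 1 (Benois).**  Let `M` be a finitely generated free module over `ℋ` and let
`A`, `B` be two `ℋ`-submodules of `M`.  If the natural maps `A/XA → M/XM` and
`B/XB → M/XM` are injective (i.e. `A ∩ XM = XA` and `B ∩ XM = XB`) and the images of
`A/XA` and `B/XB` inside `M/XM` intersect trivially (i.e. `(A + XM) ∩ (B + XM) ⊆ XM`),
then `A ∩ B = {0}`. -/
theorem inf_eq_bot_of_coinvariants_inf_eq_bot
    (p : ℕ) [Fact (Nat.Prime p)]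
    (E : Type) [NormedField E] [IsUltrametricDist E]
    [NormedAlgebra ℚ_[p] E] [FiniteDimensional ℚ_[p] E]
    (hnorm : ∀ x : ℚ_[p], ‖algebraMap ℚ_[p] E x‖ = ‖x‖)
    (M : Type) [AddCommGroup M] [Module ↥(Hcal E) M]
    [Module.Free ↥(Hcal E) M] [Module.Finite ↥(Hcal E) M]
    (X : ↥(Hcal E)) (hX : (X : PowerSeries E) = PowerSeries.X)
    (A B : Submodule ↥(Hcal E) M)
    (hA : A ⊓ X • (⊤ : Submodule ↥(Hcal E) M) = X • A)
    (hB : B ⊓ X • (⊤ : Submodule ↥(Hcal E) M) = X • B)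
    (hAB : (A ⊔ X • (⊤ : Submodule ↥(Hcal E) M)) ⊓ (B ⊔ X • (⊤ : Submodule ↥(Hcal E) M))
      ≤ X • (⊤ : Submodule ↥(Hcal E) M)) :
    A ⊓ B = ⊥ := by
  have hX0 : (X : PowerSeries E) ≠ 0 := by
    rw [hX]; exact PowerSeries.X_ne_zero
  -- cancellation of X on M via a basis
  let bas := Module.Free.chooseBasis (↥(Hcal E)) M
  have hcancel : ∀ a b : M, X • a = X • b → a = b := by
    intro a b h
    apply bas.repr.injective
    refine Finsupp.ext fun i => Subtype.ext ?_
    have h2 := congrArg (fun z => ((bas.repr z i : ↥(Hcal E)) : PowerSeries E)) h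
    simp only [map_smul, Finsupp.smul_apply, smul_eq_mul, Subring.coe_mul] at h2
    exact mul_left_cancel₀ hX0 h2
  have memsmul : ∀ (r : ↥(Hcal E)) (N : Submodule (↥(Hcal E)) M) (x : M),
      x ∈ r • N ↔ ∃ m ∈ N, x = r • m := by
    intro r N x
    rw [← Submodule.singleton_set_smul N r, Submodule.mem_singleton_set_smul]
  have key : A ⊓ B ≤ X • (A ⊓ B) := by
    intro m hm
    have hmX : m ∈ X • (⊤ : Submodule (↥(Hcal E)) M) :=
      hAB ⟨Submodule.mem_sup_left hm.1, Submodule.mem_sup_left hm.2⟩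
    have hmA : m ∈ X • A := by rw [← hA]; exact ⟨hm.1, hmX⟩
    have hmB : m ∈ X • B := by rw [← hB]; exact ⟨hm.2, hmX⟩
    obtain ⟨a, haA, ha⟩ := (memsmul X A m).mp hmA
    obtain ⟨b, hbB, hb⟩ := (memsmul X B m).mp hmB
    have hab : a = b := hcancel a b (ha.symm.trans hb)
    exact (memsmul X (A ⊓ B) m).mpr ⟨a, ⟨haA, hab ▸ hbB⟩, ha⟩
  have pow : ∀ n : ℕ, A ⊓ B ≤ X ^ n • (⊤ : Submodule (↥(Hcal E)) M) := by
    intro n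
    induction n with
    | zero => simp
    | succ n ih =>
      intro m hm
      obtain ⟨a, haAB, ha⟩ := (memsmul X (A ⊓ B) m).mp (key hm)
      obtain ⟨y, -, hy⟩ := (memsmul (X ^ n) ⊤ a).mp (ih haAB)
      refine (memsmul (X ^ (n + 1)) ⊤ m).mpr ⟨y, trivial, ?_⟩
      rw [pow_succ', mul_smul, ← hy, ← ha]
  rw [eq_bot_iff]
  intro m hm
  have hcoef : ∀ i, bas.repr m i = 0 := by
    intro i
    have hdvd : ∀ n : ℕ, (PowerSeries.X : PowerSeries E) ^ n ∣
        ((bas.repr m i : ↥(Hcal E)) : PowerSeries E) := by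
      intro n
      obtain ⟨y, -, hy⟩ := (memsmul (X ^ n) ⊤ m).mp (pow n hm)
      refine ⟨((bas.repr y i : ↥(Hcal E)) : PowerSeries E), ?_⟩
      have h2 := congrArg (fun z => ((bas.repr z i : ↥(Hcal E)) : PowerSeries E)) hy
      simp only [map_smul, Finsupp.smul_apply, smul_eq_mul, Subring.coe_mul,
        SubmonoidClass.coe_pow, hX] at h2
      exact h2
    have hz : ((bas.repr m i : ↥(Hcal E)) : PowerSeries E) = 0 := by
      ext k
      have h3 := (PowerSeries.X_pow_dvd_iff.mp (hdvd (k + 1))) k (Nat.lt_succ_self k)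
      simpa using h3
    exact Subtype.ext (by simpa using hz)
  refine Submodule.mem_bot _ |>.mpr (bas.repr.injective (Finsupp.ext fun i => ?_))
  simp [hcoef i]
end

section
/- For every integer n ≥ 1, the ring ℋ_n = { ∑_{k≥0} a_k X^k ∈ E[[X]] : ‖a_k‖·p^{-k/n} → 0 as k → ∞ } (the ring of rigid analytic functions on the closed disc of radius p^{-1/n}) is a Euclidean ring; in particular it is an integral domain in which every ideal is principal (a principal ideal domain). -/
/-!
Statement 1.  For every integer `n ≥ 1` the ring
`ℋₙ = { ∑ aₖ Xᵏ ∈ E[[X]] : ‖aₖ‖ · p^{-k/n} → 0 }` of rigid analytic functions on the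
closed `p`-adic disc of radius `p^{-1/n}` is a Euclidean ring; in particular it is an
integral domain in which every ideal is principal (a principal ideal domain).
-/

open Filter PowerSeries

section Aux

variable {E : Type} [NormedField E] [IsUltrametricDist E]

/-- Auxiliary: the coefficientwise convergence condition on a closed disc is stable
under multiplication of power series (ultrametric Cauchy products). -/
private lemma mul_aux (ρ : ℕ → ℝ) (hpos : ∀ k, 0 < ρ k)
    (hadd : ∀ i j : ℕ, ρ i * ρ j = ρ (i + j)) {f g : PowerSeries E}
    (hf : Tendsto (fun k : ℕ => ‖(PowerSeries.coeff (R := E) k) f‖ * ρ k) atTop (nhds 0))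
    (hg : Tendsto (fun k : ℕ => ‖(PowerSeries.coeff (R := E) k) g‖ * ρ k) atTop (nhds 0)) :
    Tendsto (fun k : ℕ => ‖(PowerSeries.coeff (R := E) k) (f * g)‖ * ρ k) atTop (nhds 0) := by
  obtain ⟨Ca, hCa⟩ := hf.bddAbove_range
  obtain ⟨Cb, hCb⟩ := hg.bddAbove_range
  have hCa' : ∀ k : ℕ, ‖(PowerSeries.coeff (R := E) k) f‖ * ρ k ≤ Ca :=
    fun k => hCa (Set.mem_range_self k)
  have hCb' : ∀ k : ℕ, ‖(PowerSeries.coeff (R := E) k) g‖ * ρ k ≤ Cb :=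
    fun k => hCb (Set.mem_range_self k)
  have hCa0 : 0 ≤ Ca := le_trans (mul_nonneg (norm_nonneg _) (hpos 0).le) (hCa' 0)
  have hCb0 : 0 ≤ Cb := le_trans (mul_nonneg (norm_nonneg _) (hpos 0).le) (hCb' 0)
  obtain ⟨K, hK1, hCaK, hCbK⟩ : ∃ K : ℝ, 1 ≤ K ∧ Ca ≤ K ∧ Cb ≤ K :=
    ⟨max (max Ca Cb) 1, le_max_right _ _,
      le_trans (le_max_left _ _) (le_max_left _ _),
      le_trans (le_max_right _ _) (le_max_left _ _)⟩
  have hK0 : 0 < K := lt_of_lt_of_le one_pos hK1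
  refine Metric.tendsto_atTop.mpr fun ε hε => ?_
  obtain ⟨δ, hδ, hδK⟩ : ∃ δ : ℝ, 0 < δ ∧ δ * K = ε / 2 :=
    ⟨ε / (2 * K), by positivity, by field_simp <;> ring⟩
  obtain ⟨N1, hN1⟩ := Metric.tendsto_atTop.mp hf δ hδ
  obtain ⟨N2, hN2⟩ := Metric.tendsto_atTop.mp hg δ hδ
  refine ⟨N1 + N2, fun m hm => ?_⟩
  rw [Real.dist_eq, sub_zero, abs_of_nonneg (mul_nonneg (norm_nonneg _) (hpos m).le)]
  have hterm : ‖(PowerSeries.coeff (R := E) m) (f * g)‖ ≤ δ * K / ρ m := by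
    rw [PowerSeries.coeff_mul]
    refine IsUltrametricDist.norm_sum_le_of_forall_le_of_nonneg
      (div_nonneg (mul_nonneg hδ.le hK0.le) (hpos m).le) ?_
    rintro ⟨i, j⟩ hij
    replace hij : i + j = m := by simpa using hij
    rw [norm_mul]
    have key : ‖(PowerSeries.coeff (R := E) i) f‖ * ρ i * (‖(PowerSeries.coeff (R := E) j) g‖ * ρ j)
        ≤ δ * K := by
      rcases (show N1 ≤ i ∨ N2 ≤ j by omega) with h | h
      · have h1 : ‖(PowerSeries.coeff (R := E) i) f‖ * ρ i < δ := by
          have h' := hN1 i h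
          rwa [Real.dist_eq, sub_zero,
            abs_of_nonneg (mul_nonneg (norm_nonneg _) (hpos i).le)] at h'
        calc ‖(PowerSeries.coeff (R := E) i) f‖ * ρ i * (‖(PowerSeries.coeff (R := E) j) g‖ * ρ j)
            ≤ δ * Cb :=
              mul_le_mul h1.le (hCb' j) (mul_nonneg (norm_nonneg _) (hpos j).le) hδ.le
          _ ≤ δ * K := by gcongr
      · have h2 : ‖(PowerSeries.coeff (R := E) j) g‖ * ρ j < δ := by
          have h' := hN2 j h
          rwa [Real.dist_eq, sub_zero,
            abs_of_nonneg (mul_nonneg (norm_nonneg _) (hpos j).le)] at h'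
        calc ‖(PowerSeries.coeff (R := E) i) f‖ * ρ i * (‖(PowerSeries.coeff (R := E) j) g‖ * ρ j)
            ≤ Ca * δ :=
              mul_le_mul (hCa' i) h2.le (mul_nonneg (norm_nonneg _) (hpos j).le) hCa0
          _ ≤ K * δ := by gcongr
          _ = δ * K := mul_comm _ _
    have hρm : ρ i * ρ j = ρ m := by rw [hadd i j, hij]
    rw [le_div_iff₀ (hpos m)]
    calc ‖(PowerSeries.coeff (R := E) i) f‖ * ‖(PowerSeries.coeff (R := E) j) g‖ * ρ m
        = ‖(PowerSeries.coeff (R := E) i) f‖ * ρ i * (‖(PowerSeries.coeff (R := E) j) g‖ * ρ j) := by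
          rw [← hρm]; ring
      _ ≤ δ * K := key
  calc ‖(PowerSeries.coeff (R := E) m) (f * g)‖ * ρ m ≤ (δ * K / ρ m) * ρ m :=
        mul_le_mul_of_nonneg_right hterm (hpos m).le
    _ = δ * K := div_mul_cancel₀ _ (hpos m).ne'
    _ = ε / 2 := hδK
    _ < ε := by linarith

end Aux

/-- The ring `ℋₙ = Γ(Wₙ, 𝒪_{Wₙ})` of rigid analytic functions on the closed `p`-adic
disc of radius `p^{-1/n}`: all power series `∑ aₖ Xᵏ` over `E` such that
`‖aₖ‖ · p^{-k/n} → 0` as `k → ∞`. -/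
noncomputable def Hn (p : ℕ) [hp : Fact (Nat.Prime p)] (E : Type) [NormedField E]
    [IsUltrametricDist E] (n : ℕ) : Subring (PowerSeries E) where
  carrier := {f | Tendsto
    (fun k : ℕ => ‖(PowerSeries.coeff (R := E) k) f‖ * (p : ℝ) ^ (-(k : ℝ) / (n : ℝ)))
    atTop (nhds 0)}
  zero_mem' := by
    simp only [Set.mem_setOf_eq, map_zero, norm_zero, zero_mul]
    exact tendsto_const_nhds
  one_mem' := by
    refine Tendsto.congr' ?_ (tendsto_const_nhds : Tendsto (fun _ : ℕ => (0 : ℝ)) atTop (nhds 0))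
    filter_upwards [eventually_ge_atTop 1] with k hk
    rw [PowerSeries.coeff_one]
    simp [Nat.one_le_iff_ne_zero.mp hk]
  add_mem' := by
    intro f g hf hg
    have h := hf.add hg
    rw [add_zero] at h
    refine squeeze_zero (fun k => by positivity) (fun k => ?_) h
    rw [map_add]
    have hρ : (0 : ℝ) ≤ (p : ℝ) ^ (-(k : ℝ) / (n : ℝ)) :=
      Real.rpow_nonneg (by positivity) _
    calc ‖(PowerSeries.coeff (R := E) k) f + (PowerSeries.coeff (R := E) k) g‖ * (p : ℝ) ^ (-(k : ℝ) / (n : ℝ))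
        ≤ (‖(PowerSeries.coeff (R := E) k) f‖ + ‖(PowerSeries.coeff (R := E) k) g‖) *
            (p : ℝ) ^ (-(k : ℝ) / (n : ℝ)) := by
          gcongr
          exact norm_add_le _ _
      _ = ‖(PowerSeries.coeff (R := E) k) f‖ * (p : ℝ) ^ (-(k : ℝ) / (n : ℝ)) +
            ‖(PowerSeries.coeff (R := E) k) g‖ * (p : ℝ) ^ (-(k : ℝ) / (n : ℝ)) := by ring
  neg_mem' := by
    intro f hf
    simpa using hf
  mul_mem' := by
    intro f g hf hg
    have hp0 : (0 : ℝ) < (p : ℝ) := by exact_mod_cast hp.out.pos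
    refine mul_aux (fun k : ℕ => (p : ℝ) ^ (-(k : ℝ) / (n : ℝ)))
      (fun k => Real.rpow_pos_of_pos hp0 _) (fun i j => ?_) hf hg
    rw [← Real.rpow_add hp0]
    congr 1
    push_cast
    ring
  
set_option linter.unusedSectionVars false

section Lazard

namespace Laz
variable {E : Type} [NormedField E] [IsUltrametricDist E]
variable (ρ : ℕ → ℝ)

/-- weighted coefficient norm -/
noncomputable def W (f : PowerSeries E) (k : ℕ) : ℝ := ‖(PowerSeries.coeff (R := E) k) f‖ * ρ k

/-- membership in the disc algebra -/
def Mem (f : PowerSeries E) : Prop := Tendsto (W ρ f) atTop (nhds 0)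

variable (hpos : ∀ k, 0 < ρ k)

include hpos

lemma W_nonneg (f : PowerSeries E) (k : ℕ) : 0 ≤ W ρ f k :=
  mul_nonneg (norm_nonneg _) (hpos k).le

omit hpos in
lemma W_zero (k : ℕ) : W ρ (0 : PowerSeries E) k = 0 := by simp [W]

omit hpos in
lemma W_neg (f : PowerSeries E) (k : ℕ) : W ρ (-f) k = W ρ f k := by simp [W]

lemma W_eq_zero_iff {f : PowerSeries E} {k : ℕ} :
    W ρ f k = 0 ↔ (PowerSeries.coeff (R := E) k) f = 0 := by
  rw [W, mul_eq_zero]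
  constructor
  · rintro (h | h)
    · exact norm_eq_zero.mp h
    · exact absurd h (hpos k).ne'
  · intro h; left; simp [h]

lemma W_add_le (f g : PowerSeries E) (k : ℕ) :
    W ρ (f + g) k ≤ max (W ρ f k) (W ρ g k) := by
  rw [W, map_add]
  calc ‖(PowerSeries.coeff (R := E) k) f + (PowerSeries.coeff (R := E) k) g‖ * ρ k
      ≤ max ‖(PowerSeries.coeff (R := E) k) f‖ ‖(PowerSeries.coeff (R := E) k) g‖ * ρ k :=
        mul_le_mul_of_nonneg_right (IsUltrametricDist.norm_add_le_max _ _) (hpos k).le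
    _ = max (W ρ f k) (W ρ g k) := by
        rw [W, W, max_mul_of_nonneg _ _ (hpos k).le]

lemma W_sub_le (f g : PowerSeries E) (k : ℕ) :
    W ρ (f - g) k ≤ max (W ρ f k) (W ρ g k) := by
  rw [sub_eq_add_neg]
  simpa [W_neg] using W_add_le ρ hpos f (-g) k

omit hpos in
/-- strict ultrametric bound for finite sums -/
lemma norm_sum_lt {ι : Type*} {s : Finset ι} {v : ι → E} {C : ℝ} (hC : 0 < C)
    (h : ∀ i ∈ s, ‖v i‖ < C) : ‖∑ i ∈ s, v i‖ < C := by
  classical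
  induction s using Finset.cons_induction with
  | empty => simpa using hC
  | cons a s' hx ih =>
    rw [Finset.sum_cons]
    calc ‖v a + ∑ i ∈ s', v i‖ ≤ max ‖v a‖ ‖∑ i ∈ s', v i‖ :=
          IsUltrametricDist.norm_add_le_max _ _
      _ < C := max_lt (h a (Finset.mem_cons_self _ _))
          (ih fun i hi => h i (Finset.mem_cons_of_mem hi))


/-- The Weierstrass degree: the largest index at which the weighted coefficient
norm attains its maximum. -/
noncomputable def gdeg (f : PowerSeries E) : ℕ :=
  sSup {k | ∀ j, W ρ f j ≤ W ρ f k}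

section gdeg

variable {ρ} {f : PowerSeries E} (hf : Mem ρ f) (h0 : f ≠ 0)

include hpos hf h0

lemma exists_max : ∃ K, ∀ j, W ρ f j ≤ W ρ f K := by
  obtain ⟨k0, hk0⟩ : ∃ k0, (PowerSeries.coeff (R := E) k0) f ≠ 0 := by
    by_contra h
    push_neg at h
    exact h0 (PowerSeries.ext fun k => by simp [h k])
  have hk0pos : 0 < W ρ f k0 := by
    rcases lt_or_eq_of_le (W_nonneg ρ hpos f k0) with h | h
    · exact h
    · exact absurd ((W_eq_zero_iff ρ hpos).mp h.symm) hk0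
  obtain ⟨N, hN⟩ := (Metric.tendsto_atTop.mp hf) (W ρ f k0) hk0pos
  have hN' : ∀ k, N ≤ k → W ρ f k < W ρ f k0 := by
    intro k hk
    have := hN k hk
    rwa [Real.dist_eq, sub_zero, abs_of_nonneg (W_nonneg ρ hpos f k)] at this
  obtain ⟨K, hKmem, hK⟩ := (Finset.range (N + 1)).exists_max_image (W ρ f)
    ⟨0, Finset.mem_range.mpr (Nat.succ_pos N)⟩
  have hk0N : k0 < N + 1 := by
    by_contra h
    exact absurd (hN' k0 (by omega)) (lt_irrefl _)
  refine ⟨K, fun j => ?_⟩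
  rcases lt_or_ge j (N + 1) with hj | hj
  · exact hK j (Finset.mem_range.mpr hj)
  · exact le_of_lt (lt_of_lt_of_le (hN' j (by omega))
      (hK k0 (Finset.mem_range.mpr hk0N)))

lemma maxset_bddAbove : BddAbove {k | ∀ j, W ρ f j ≤ W ρ f k} := by
  obtain ⟨K, hK⟩ := exists_max hpos hf h0
  obtain ⟨k0, hk0⟩ : ∃ k0, (PowerSeries.coeff (R := E) k0) f ≠ 0 := by
    by_contra h
    push_neg at h
    exact h0 (PowerSeries.ext fun k => by simp [h k])
  have hMpos : 0 < W ρ f K := by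
    rcases lt_or_eq_of_le (W_nonneg ρ hpos f k0) with h | h
    · exact lt_of_lt_of_le h (hK k0)
    · exact absurd ((W_eq_zero_iff ρ hpos).mp h.symm) hk0
  obtain ⟨N, hN⟩ := (Metric.tendsto_atTop.mp hf) (W ρ f K) hMpos
  refine ⟨N, fun k hk => ?_⟩
  by_contra h
  push_neg at h
  have h1 := hN k (le_of_lt h)
  rw [Real.dist_eq, sub_zero, abs_of_nonneg (W_nonneg ρ hpos f k)] at h1
  exact absurd (lt_of_le_of_lt (le_trans (hK K) (hk K)) h1) (lt_irrefl _)

lemma gdeg_mem : ∀ j, W ρ f j ≤ W ρ f (gdeg ρ f) := by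
  obtain ⟨K, hK⟩ := exists_max hpos hf h0
  have hne : Set.Nonempty {k | ∀ j, W ρ f j ≤ W ρ f k} := ⟨K, hK⟩
  exact Nat.sSup_mem hne (maxset_bddAbove hpos hf h0)

lemma gdeg_pos : 0 < W ρ f (gdeg ρ f) := by
  obtain ⟨k0, hk0⟩ : ∃ k0, (PowerSeries.coeff (R := E) k0) f ≠ 0 := by
    by_contra h
    push_neg at h
    exact h0 (PowerSeries.ext fun k => by simp [h k])
  rcases lt_or_eq_of_le (W_nonneg ρ hpos f k0) with h | h
  · exact lt_of_lt_of_le h (gdeg_mem hpos hf h0 k0)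
  · exact absurd ((W_eq_zero_iff ρ hpos).mp h.symm) hk0

lemma gdeg_last : ∀ k, gdeg ρ f < k → W ρ f k < W ρ f (gdeg ρ f) := by
  intro k hk
  have hnot : ¬ (∀ j, W ρ f j ≤ W ρ f k) := by
    intro hmem
    exact absurd (le_csSup (maxset_bddAbove hpos hf h0) hmem) (not_le.mpr hk)
  push_neg at hnot
  obtain ⟨j, hj⟩ := hnot
  exact lt_of_lt_of_le hj (gdeg_mem hpos hf h0 j)

lemma gdeg_eq {D : ℕ} (hmax : ∀ j, W ρ f j ≤ W ρ f D)
    (hlast : ∀ k, D < k → W ρ f k < W ρ f D) : gdeg ρ f = D := by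
  have h1 : D ≤ gdeg ρ f := le_csSup (maxset_bddAbove hpos hf h0) hmax
  rcases lt_or_eq_of_le h1 with h | h
  · have h2 := hlast _ h
    have h3 := le_antisymm (gdeg_mem hpos hf h0 D) (hmax (gdeg ρ f))
    rw [h3] at h2
    exact absurd h2 (lt_irrefl _)
  · exact h.symm

end gdeg


section mul

variable (hmul : ∀ i j : ℕ, ρ i * ρ j = ρ (i + j))

include hpos hmul

lemma Mem.mul {f g : PowerSeries E} (hf : Mem ρ f) (hg : Mem ρ g) :
    Mem ρ (f * g) :=
  mul_aux ρ hpos hmul hf hg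

lemma W_term_eq (f g : PowerSeries E) (i j : ℕ) :
    ‖(PowerSeries.coeff (R := E) i) f * (PowerSeries.coeff (R := E) j) g‖ * ρ (i + j)
      = W ρ f i * W ρ g j := by
  rw [norm_mul, ← hmul i j, W, W]; ring

lemma W_mul_le' {f g : PowerSeries E} {C : ℝ} (hC : 0 ≤ C)
    (h : ∀ i j, W ρ f i * W ρ g j ≤ C) : ∀ k, W ρ (f * g) k ≤ C := by
  intro k
  rw [W, PowerSeries.coeff_mul]
  have hb : ‖∑ p ∈ Finset.HasAntidiagonal.antidiagonal k,
      (PowerSeries.coeff (R := E) p.1) f * (PowerSeries.coeff (R := E) p.2) g‖ ≤ C / ρ k := by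
    refine IsUltrametricDist.norm_sum_le_of_forall_le_of_nonneg
      (div_nonneg hC (hpos k).le) ?_
    rintro ⟨i, j⟩ hp
    rw [Finset.HasAntidiagonal.mem_antidiagonal] at hp
    rw [le_div_iff₀ (hpos k), ← hp, W_term_eq ρ hpos hmul]
    exact h i j
  calc ‖∑ p ∈ Finset.HasAntidiagonal.antidiagonal k,
      (PowerSeries.coeff (R := E) p.1) f * (PowerSeries.coeff (R := E) p.2) g‖ * ρ k
      ≤ (C / ρ k) * ρ k := mul_le_mul_of_nonneg_right hb (hpos k).le
    _ = C := div_mul_cancel₀ _ (hpos k).ne'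

lemma W_mul_lt {f g : PowerSeries E} {C : ℝ} {k : ℕ} (hC : 0 < C)
    (h : ∀ i j, i + j = k → W ρ f i * W ρ g j < C) : W ρ (f * g) k < C := by
  rw [W, PowerSeries.coeff_mul]
  have hb : ‖∑ p ∈ Finset.HasAntidiagonal.antidiagonal k,
      (PowerSeries.coeff (R := E) p.1) f * (PowerSeries.coeff (R := E) p.2) g‖ < C / ρ k := by
    refine norm_sum_lt (div_pos hC (hpos k)) ?_
    rintro ⟨i, j⟩ hp
    rw [Finset.HasAntidiagonal.mem_antidiagonal] at hp
    rw [lt_div_iff₀ (hpos k), ← hp, W_term_eq ρ hpos hmul]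
    exact h i j hp
  calc ‖∑ p ∈ Finset.HasAntidiagonal.antidiagonal k,
      (PowerSeries.coeff (R := E) p.1) f * (PowerSeries.coeff (R := E) p.2) g‖ * ρ k
      < (C / ρ k) * ρ k := mul_lt_mul_of_pos_right hb (hpos k)
    _ = C := div_mul_cancel₀ _ (hpos k).ne'

lemma gdeg_mul {f g : PowerSeries E} (hf : Mem ρ f) (hg : Mem ρ g)
    (hf0 : f ≠ 0) (hg0 : g ≠ 0) :
    W ρ (f * g) (gdeg ρ f + gdeg ρ g) = W ρ f (gdeg ρ f) * W ρ g (gdeg ρ g) ∧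
      f * g ≠ 0 ∧ gdeg ρ (f * g) = gdeg ρ f + gdeg ρ g := by
  set df := gdeg ρ f with hdf
  set dg := gdeg ρ g with hdg
  set Mf := W ρ f df with hMf
  set Mg := W ρ g dg with hMg
  have hMfpos : 0 < Mf := gdeg_pos hpos hf hf0
  have hMgpos : 0 < Mg := gdeg_pos hpos hg hg0
  have hfle : ∀ j, W ρ f j ≤ Mf := gdeg_mem hpos hf hf0
  have hgle : ∀ j, W ρ g j ≤ Mg := gdeg_mem hpos hg hg0
  have hflt : ∀ k, df < k → W ρ f k < Mf := gdeg_last hpos hf hf0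
  have hglt : ∀ k, dg < k → W ρ g k < Mg := gdeg_last hpos hg hg0
  -- strict bound for off-diagonal pairs
  have hpair : ∀ i j : ℕ, (df < i ∨ dg < j) → W ρ f i * W ρ g j < Mf * Mg := by
    intro i j hij
    rcases hij with h | h
    · calc W ρ f i * W ρ g j ≤ W ρ f i * Mg :=
            mul_le_mul_of_nonneg_left (hgle j) (W_nonneg ρ hpos f i)
        _ < Mf * Mg := mul_lt_mul_of_pos_right (hflt i h) hMgpos
    · calc W ρ f i * W ρ g j ≤ Mf * W ρ g j :=
            mul_le_mul_of_nonneg_right (hfle i) (W_nonneg ρ hpos g j)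
        _ < Mf * Mg := mul_lt_mul_of_pos_left (hglt j h) hMfpos
  -- the key coefficient
  have hkey : W ρ (f * g) (df + dg) = Mf * Mg := by
    rw [W, PowerSeries.coeff_mul]
    have hmem : ((df, dg) : ℕ × ℕ) ∈ Finset.HasAntidiagonal.antidiagonal (df + dg) :=
      Finset.HasAntidiagonal.mem_antidiagonal.mpr rfl
    rw [← Finset.add_sum_erase _ _ hmem]
    set T := ∑ p ∈ (Finset.HasAntidiagonal.antidiagonal (df + dg)).erase (df, dg),
      (PowerSeries.coeff (R := E) p.1) f * (PowerSeries.coeff (R := E) p.2) g with hT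
    have hx : ‖(PowerSeries.coeff (R := E) df) f * (PowerSeries.coeff (R := E) dg) g‖ * ρ (df + dg)
        = Mf * Mg := W_term_eq ρ hpos hmul f g df dg
    have hTlt : ‖T‖ < ‖(PowerSeries.coeff (R := E) df) f * (PowerSeries.coeff (R := E) dg) g‖ := by
      have h1 : ‖T‖ < Mf * Mg / ρ (df + dg) := by
        refine norm_sum_lt (div_pos (mul_pos hMfpos hMgpos) (hpos _)) ?_
        rintro ⟨i, j⟩ hp
        rw [Finset.mem_erase, Finset.HasAntidiagonal.mem_antidiagonal] at hp
        obtain ⟨hne, hsum⟩ := hp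
        rw [lt_div_iff₀ (hpos _), ← hsum, W_term_eq ρ hpos hmul]
        refine hpair i j ?_
        by_contra hcon
        push_neg at hcon
        have hi : i ≤ df := hcon.1
        have hj : j ≤ dg := hcon.2
        have : i = df ∧ j = dg := by omega
        exact hne (Prod.ext this.1 this.2)
      have h2 : ‖(PowerSeries.coeff (R := E) df) f * (PowerSeries.coeff (R := E) dg) g‖
          = Mf * Mg / ρ (df + dg) := by
        rw [eq_div_iff (hpos _).ne', hx]
      rw [h2]; exact h1
    have hadd : ‖(PowerSeries.coeff (R := E) df) f * (PowerSeries.coeff (R := E) dg) g + T‖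
        = ‖(PowerSeries.coeff (R := E) df) f * (PowerSeries.coeff (R := E) dg) g‖ := by
      rw [IsUltrametricDist.norm_add_eq_max_of_norm_ne_norm (hTlt.ne').symm.symm]
      · exact max_eq_left hTlt.le
    rw [hadd, hx]
  have hne : f * g ≠ 0 := by
    intro hcon
    rw [hcon, W_zero] at hkey
    exact absurd hkey (ne_of_gt (mul_pos hMfpos hMgpos)).symm
  refine ⟨hkey, hne, ?_⟩
  have hfg : Mem ρ (f * g) := Mem.mul ρ hpos hmul hf hg
  refine gdeg_eq hpos hfg hne (fun j => ?_) (fun k hk => ?_)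
  · rw [hkey]
    refine W_mul_le' ρ hpos hmul (mul_pos hMfpos hMgpos).le (fun i j => ?_) j
    exact mul_le_mul (hfle i) (hgle j) (W_nonneg ρ hpos g j) hMfpos.le
  · rw [hkey]
    refine W_mul_lt ρ hpos hmul (mul_pos hMfpos hMgpos) (fun i j hij => ?_)
    exact hpair i j (by omega)

end mul

section step

variable (hmul : ∀ i j : ℕ, ρ i * ρ j = ρ (i + j))

omit hpos in
lemma Mem_zero : Mem ρ (0 : PowerSeries E) := by
  exact tendsto_const_nhds.congr (fun k => (W_zero ρ k).symm)

include hpos in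
lemma Mem_add {f g : PowerSeries E} (hf : Mem ρ f) (hg : Mem ρ g) :
    Mem ρ (f + g) := by
  have h := Filter.Tendsto.add hf hg
  rw [add_zero] at h
  exact squeeze_zero (fun k => W_nonneg ρ hpos _ k)
    (fun k => le_trans (W_add_le ρ hpos f g k)
      (max_le_add_of_nonneg (W_nonneg ρ hpos f k) (W_nonneg ρ hpos g k))) h

include hpos in
lemma Mem_sub {f g : PowerSeries E} (hf : Mem ρ f) (hg : Mem ρ g) :
    Mem ρ (f - g) := by
  have hng : Mem ρ (-g) := hg.congr (fun k => (W_neg ρ g k).symm)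
  rw [sub_eq_add_neg]
  exact Mem_add ρ hpos hf hng

include hpos in
lemma Mem_poly (P : Polynomial E) : Mem ρ (↑P : PowerSeries E) := by
  rw [Mem]
  refine Tendsto.congr' ?_ (tendsto_const_nhds : Tendsto (fun _ : ℕ => (0:ℝ)) atTop (nhds 0))
  filter_upwards [eventually_gt_atTop P.natDegree] with k hk
  rw [W, Polynomial.coeff_coe, Polynomial.coeff_eq_zero_of_natDegree_lt hk]
  simp

/-- canonical sup norm -/
noncomputable def Gn (f : PowerSeries E) : ℝ :=
  open Classical in if f = 0 then 0 else W ρ f (gdeg ρ f)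

variable {ρ}

include hpos

lemma W_le_Gn {f : PowerSeries E} (hf : Mem ρ f) (k : ℕ) : W ρ f k ≤ Gn ρ f := by
  rw [Gn]
  split
  · rename_i h; subst h; rw [W_zero]
  · rename_i h; exact gdeg_mem hpos hf h k

lemma Gn_nonneg (f : PowerSeries E) : 0 ≤ Gn ρ f := by
  rw [Gn]; split
  · rfl
  · exact W_nonneg ρ hpos f _

lemma Gn_le {f : PowerSeries E} {C : ℝ} (hC : 0 ≤ C)
    (h : ∀ k, W ρ f k ≤ C) : Gn ρ f ≤ C := by
  rw [Gn]; split
  · exact hC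
  · exact h _

lemma Gn_pos {f : PowerSeries E} (hf : Mem ρ f) (h0 : f ≠ 0) : 0 < Gn ρ f := by
  rw [Gn, if_neg h0]
  exact gdeg_pos hpos hf h0

lemma Gn_eq {f : PowerSeries E} (h0 : f ≠ 0) : Gn ρ f = W ρ f (gdeg ρ f) :=
  if_neg h0

lemma exists_c {g : PowerSeries E} (hg : Mem ρ g) (hg0 : g ≠ 0) :
    ∃ c : ℝ, 0 < c ∧ c < 1 ∧ ∀ k, gdeg ρ g < k → W ρ g k ≤ c * Gn ρ g := by
  set Mg := Gn ρ g with hMg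
  have hMgW : Mg = W ρ g (gdeg ρ g) := Gn_eq hpos hg0
  have hMgpos : 0 < Mg := Gn_pos hpos hg hg0
  obtain ⟨N, hN⟩ := Metric.tendsto_atTop.mp hg (Mg / 2) (by positivity)
  have hN' : ∀ k, N ≤ k → W ρ g k < Mg / 2 := by
    intro k hk
    have := hN k hk
    rwa [Real.dist_eq, sub_zero, abs_of_nonneg (W_nonneg ρ hpos g k)] at this
  set v : ℕ → ℝ := fun k => if gdeg ρ g < k then W ρ g k / Mg else 1/2 with hv
  have hne : (Finset.range (N + 1)).Nonempty := ⟨0, Finset.mem_range.mpr (Nat.succ_pos N)⟩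
  set c := (Finset.range (N + 1)).sup' hne v with hc
  have hchalf : 1/2 ≤ c := by
    have h0 : v 0 = 1/2 := by simp [hv]
    calc (1:ℝ)/2 = v 0 := h0.symm
      _ ≤ c := Finset.le_sup' v (Finset.mem_range.mpr (Nat.succ_pos N))
  refine ⟨c, by linarith, ?_, ?_⟩
  · rw [hc, Finset.sup'_lt_iff]
    intro k _
    simp only [hv]
    split
    · rename_i h
      rw [div_lt_one hMgpos, hMgW]
      exact gdeg_last hpos hg hg0 k h
    · norm_num
  · intro k hk
    rcases lt_or_ge k (N + 1) with h | h
    · have hvk : v k ≤ c := Finset.le_sup' v (Finset.mem_range.mpr h)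
      rw [hv] at hvk
      simp only [if_pos hk] at hvk
      rwa [div_le_iff₀ hMgpos] at hvk
    · have := hN' k (by omega)
      have hcm : Mg / 2 ≤ c * Mg := by
        calc Mg / 2 = (1/2) * Mg := by ring
          _ ≤ c * Mg := mul_le_mul_of_nonneg_right hchalf hMgpos.le
      linarith

include hmul

lemma step {g : PowerSeries E} (hg : Mem ρ g) (hg0 : g ≠ 0) {c : ℝ}
    (hc0 : 0 < c) (hc1 : c < 1)
    (hcb : ∀ k, gdeg ρ g < k → W ρ g k ≤ c * Gn ρ g)
    (f : PowerSeries E) (hf : Mem ρ f) :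
    ∃ q r : PowerSeries E, Mem ρ q ∧ Mem ρ r ∧
      (∀ k, gdeg ρ g ≤ k → (PowerSeries.coeff (R := E) k) r = 0) ∧
      (∀ k, W ρ q k * Gn ρ g ≤ Gn ρ f) ∧ (∀ k, W ρ r k ≤ Gn ρ f) ∧
      (∀ k, W ρ (f - q * g - r) k ≤ c * Gn ρ f) := by
  by_cases hf0 : f = 0
  · refine ⟨0, 0, Mem_zero ρ, Mem_zero ρ, fun k _ => by simp, fun k => ?_, fun k => ?_, fun k => ?_⟩
    · rw [W_zero, zero_mul]
      exact Gn_nonneg hpos f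
    · rw [W_zero]
      exact Gn_nonneg hpos f
    · subst hf0
      simp only [zero_mul, sub_zero, zero_sub, neg_zero, sub_zero]
      rw [W_zero]
      exact mul_nonneg hc0.le (Gn_nonneg hpos 0)
  set d := gdeg ρ g with hd
  set a := (PowerSeries.coeff (R := E) d) g with ha
  set Mg := Gn ρ g with hMgdef
  set Cf := Gn ρ f with hCfdef
  have hMgW : Mg = W ρ g d := Gn_eq hpos hg0
  have hMgpos : 0 < Mg := Gn_pos hpos hg hg0
  have hCfpos : 0 < Cf := Gn_pos hpos hf hf0
  have ha0 : a ≠ 0 := by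
    intro hcon
    have : W ρ g d = 0 := (W_eq_zero_iff ρ hpos).mpr hcon
    rw [← hMgW] at this
    exact absurd this hMgpos.ne'
  -- truncation point
  obtain ⟨N, hN⟩ := Metric.tendsto_atTop.mp hf (c * Cf) (by positivity)
  have hN' : ∀ k, N ≤ k → W ρ f k ≤ c * Cf := by
    intro k hk
    have := hN k hk
    rw [Real.dist_eq, sub_zero, abs_of_nonneg (W_nonneg ρ hpos f k)] at this
    exact this.le
  set F : Polynomial E := PowerSeries.trunc (N + 1) f with hF
  set G : Polynomial E := PowerSeries.trunc (d + 1) g with hG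
  have hGcoeff : G.coeff d = a := by
    rw [hG, PowerSeries.coeff_trunc, if_pos (Nat.lt_succ_self d), ha]
  have hGlow : ∀ j, j ≤ d → G.coeff j = (PowerSeries.coeff (R := E) j) g := by
    intro j hj
    rw [hG, PowerSeries.coeff_trunc, if_pos (by omega)]
  have hGhigh : ∀ j, d < j → G.coeff j = 0 := by
    intro j hj
    rw [hG, PowerSeries.coeff_trunc, if_neg (by omega)]
  have hG0 : G ≠ 0 := fun hcon => ha0 (by rw [← hGcoeff, hcon, Polynomial.coeff_zero])
  have hGnat : G.natDegree = d := by
    refine le_antisymm ?_ (Polynomial.le_natDegree_of_ne_zero (hGcoeff ▸ ha0))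
    have := PowerSeries.degree_trunc_lt g (d + 1)
    rw [← hG] at this
    exact Polynomial.natDegree_le_iff_degree_le.mpr (by
      exact_mod_cast Order.le_of_lt_succ (by exact_mod_cast this))
  have hGdeg : G.degree = (d : WithBot ℕ) := by
    rw [Polynomial.degree_eq_natDegree hG0, hGnat]
  set Gm : Polynomial E := Polynomial.C a⁻¹ * G with hGm
  have hGmMonic : Gm.Monic := by
    rw [Polynomial.Monic, hGm, Polynomial.leadingCoeff_mul, Polynomial.leadingCoeff_C,
      Polynomial.leadingCoeff, hGnat, hGcoeff]
    exact inv_mul_cancel₀ ha0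
  have hGmdeg : Gm.degree = (d : WithBot ℕ) := by
    rw [hGm, Polynomial.degree_C_mul (inv_ne_zero ha0), hGdeg]
  set q' : Polynomial E := Polynomial.C a⁻¹ * (F /ₘ Gm) with hq'
  set r' : Polynomial E := F %ₘ Gm with hr'
  have hdiv : G * q' + r' = F := by
    have h1 : G * q' = Gm * (F /ₘ Gm) := by rw [hq', hGm]; ring
    rw [h1, add_comm]
    exact Polynomial.modByMonic_add_div F Gm
  have hr'deg : r'.degree < (d : WithBot ℕ) := by
    rw [← hGmdeg]
    exact Polynomial.degree_modByMonic_lt F hGmMonic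
  have hr'coeff : ∀ k, d ≤ k → r'.coeff k = 0 := by
    intro k hk
    refine Polynomial.coeff_eq_zero_of_degree_lt (lt_of_lt_of_le hr'deg ?_)
    exact_mod_cast hk
  -- power series versions
  have hdivPS : (↑F : PowerSeries E) = ↑q' * ↑G + ↑r' := by
    rw [← hdiv]
    push_cast
    ring
  have hWFle : ∀ k, W ρ (↑F : PowerSeries E) k ≤ W ρ f k := by
    intro k
    rw [W, W, Polynomial.coeff_coe, hF, PowerSeries.coeff_trunc]
    split
    · exact le_refl _
    · simp only [norm_zero, zero_mul]
      exact W_nonneg ρ hpos f k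
  have hWFCf : ∀ k, W ρ (↑F : PowerSeries E) k ≤ Cf :=
    fun k => le_trans (hWFle k) (W_le_Gn hpos hf k)
  have hWGle : ∀ j, W ρ (↑G : PowerSeries E) j ≤ Mg := by
    intro j
    rcases le_or_gt j d with hj | hj
    · rw [W, Polynomial.coeff_coe, hGlow j hj, ← W]
      rw [hMgW]
      exact gdeg_mem hpos hg hg0 j
    · rw [W, Polynomial.coeff_coe, hGhigh j hj]
      simp only [norm_zero, zero_mul]
      exact hMgpos.le
  -- the crucial Gauss bound
  have hMq : ∀ k, W ρ (↑q' : PowerSeries E) k * Mg ≤ Cf := by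
    by_cases hq'0 : q' = 0
    · intro k
      rw [hq'0]
      push_cast
      rw [W_zero, zero_mul]
      exact hCfpos.le
    · have hq'PS : (↑q' : PowerSeries E) ≠ 0 := by
        rwa [ne_eq, Polynomial.coe_eq_zero_iff]
      have hGPS : (↑G : PowerSeries E) ≠ 0 := by
        rwa [ne_eq, Polynomial.coe_eq_zero_iff]
      have hmemq : Mem ρ (↑q' : PowerSeries E) := Mem_poly ρ hpos q'
      have hmemG : Mem ρ (↑G : PowerSeries E) := Mem_poly ρ hpos G
      have hWGd : W ρ (↑G : PowerSeries E) d = Mg := by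
        rw [W, Polynomial.coeff_coe, hGlow d (le_refl d), ← W, hMgW]
      have hgdegG : gdeg ρ (↑G : PowerSeries E) = d := by
        refine gdeg_eq hpos hmemG hGPS (fun j => ?_) (fun k hk => ?_)
        · rw [hWGd]; exact hWGle j
        · rw [hWGd, W, Polynomial.coeff_coe, hGhigh k hk]
          simp only [norm_zero, zero_mul]
          exact hMgpos
      obtain ⟨hprod, hne, hgdeg⟩ := gdeg_mul ρ hpos hmul hmemq hmemG hq'PS hGPS
      set dq := gdeg ρ (↑q' : PowerSeries E) with hdq
      have hcoeffr' : (PowerSeries.coeff (R := E) (dq + d)) (↑r' : PowerSeries E) = 0 := by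
        rw [Polynomial.coeff_coe]
        exact hr'coeff _ (by omega)
      have hWqG : W ρ ((↑q' : PowerSeries E) * (↑G : PowerSeries E)) (dq + d)
          = W ρ (↑q' : PowerSeries E) dq * Mg := by
        rw [hgdegG] at hprod
        rw [hprod, hWGd]
      have hcoeffF : W ρ (↑F : PowerSeries E) (dq + d)
          = W ρ ((↑q' : PowerSeries E) * (↑G : PowerSeries E)) (dq + d) := by
        rw [W, W, hdivPS, map_add, hcoeffr', add_zero]
      intro k
      calc W ρ (↑q' : PowerSeries E) k * Mg
          ≤ W ρ (↑q' : PowerSeries E) dq * Mg := by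
            refine mul_le_mul_of_nonneg_right ?_ hMgpos.le
            exact gdeg_mem hpos hmemq hq'PS k
        _ = W ρ (↑F : PowerSeries E) (dq + d) := by rw [hcoeffF, hWqG]
        _ ≤ Cf := hWFCf _
  have hq'Gle : ∀ k, W ρ ((↑q' : PowerSeries E) * (↑G : PowerSeries E)) k ≤ Cf := by
    refine W_mul_le' ρ hpos hmul hCfpos.le (fun i j => ?_)
    calc W ρ (↑q' : PowerSeries E) i * W ρ (↑G : PowerSeries E) j
        ≤ W ρ (↑q' : PowerSeries E) i * Mg :=
          mul_le_mul_of_nonneg_left (hWGle j) (W_nonneg ρ hpos _ i)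
      _ ≤ Cf := hMq i
  have hWr'le : ∀ k, W ρ (↑r' : PowerSeries E) k ≤ Cf := by
    intro k
    have : (↑r' : PowerSeries E) = ↑F - (↑q' : PowerSeries E) * ↑G := by rw [hdivPS]; ring
    rw [this]
    exact le_trans (W_sub_le ρ hpos _ _ k) (max_le (hWFCf k) (hq'Gle k))
  -- the remainder estimate
  have hid : f - (↑q' : PowerSeries E) * g - (↑r' : PowerSeries E)
      = (f - (↑F : PowerSeries E)) - (↑q' : PowerSeries E) * (g - (↑G : PowerSeries E)) := by
    rw [hdivPS]; ring
  have hWfF : ∀ k, W ρ (f - (↑F : PowerSeries E)) k ≤ c * Cf := by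
    intro k
    have hcoe : (PowerSeries.coeff (R := E) k) (f - (↑F : PowerSeries E))
        = (PowerSeries.coeff (R := E) k) f - (if k < N + 1 then (PowerSeries.coeff (R := E) k) f else 0) := by
      rw [map_sub, Polynomial.coeff_coe, hF, PowerSeries.coeff_trunc]
    rcases lt_or_ge k (N + 1) with hk | hk
    · rw [W, hcoe, if_pos hk, sub_self]
      simp only [norm_zero, zero_mul]
      positivity
    · rw [W, hcoe, if_neg (by omega), sub_zero, ← W]
      exact hN' k (by omega)
  have hWqgG : ∀ k, W ρ ((↑q' : PowerSeries E) * (g - (↑G : PowerSeries E))) k ≤ c * Cf := by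
    refine W_mul_le' ρ hpos hmul (by positivity) (fun i j => ?_)
    have hgG : W ρ (g - (↑G : PowerSeries E)) j ≤ c * Mg := by
      rcases le_or_gt j d with hj | hj
      · have : (PowerSeries.coeff (R := E) j) (g - (↑G : PowerSeries E)) = 0 := by
          rw [map_sub, Polynomial.coeff_coe, hGlow j hj, sub_self]
        rw [W, this]
        simp only [norm_zero, zero_mul]
        positivity
      · have : (PowerSeries.coeff (R := E) j) (g - (↑G : PowerSeries E)) = (PowerSeries.coeff (R := E) j) g := by
          rw [map_sub, Polynomial.coeff_coe, hGhigh j hj, sub_zero]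
        rw [W, this, ← W]
        exact hcb j hj
    calc W ρ (↑q' : PowerSeries E) i * W ρ (g - (↑G : PowerSeries E)) j
        ≤ W ρ (↑q' : PowerSeries E) i * (c * Mg) :=
          mul_le_mul_of_nonneg_left hgG (W_nonneg ρ hpos _ i)
      _ = c * (W ρ (↑q' : PowerSeries E) i * Mg) := by ring
      _ ≤ c * Cf := mul_le_mul_of_nonneg_left (hMq i) hc0.le
  refine ⟨(↑q' : PowerSeries E), (↑r' : PowerSeries E), Mem_poly ρ hpos q',
    Mem_poly ρ hpos r', ?_, hMq, hWr'le, ?_⟩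
  · intro k hk
    rw [Polynomial.coeff_coe]
    exact hr'coeff k hk
  · intro k
    rw [hid]
    exact le_trans (W_sub_le ρ hpos _ _ k) (max_le (hWfF k) (hWqgG k))

end step

section division

variable (hmul : ∀ i j : ℕ, ρ i * ρ j = ρ (i + j))
variable [CompleteSpace E]

include hpos

lemma Mem_eventually_lt {f : PowerSeries E} (hf : Mem ρ f) {ε : ℝ} (hε : 0 < ε) :
    ∀ᶠ k in atTop, W ρ f k < ε := by
  obtain ⟨N, hN⟩ := Metric.tendsto_atTop.mp hf ε hε
  rw [eventually_atTop]
  exact ⟨N, fun k hk => by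
    have := hN k hk
    rwa [Real.dist_eq, sub_zero, abs_of_nonneg (W_nonneg ρ hpos f k)] at this⟩

include hmul

lemma division {g : PowerSeries E} (hg : Mem ρ g) (hg0 : g ≠ 0)
    (f : PowerSeries E) (hf : Mem ρ f) :
    ∃ q r : PowerSeries E, Mem ρ q ∧ Mem ρ r ∧
      (∀ k, gdeg ρ g ≤ k → (PowerSeries.coeff (R := E) k) r = 0) ∧ f = q * g + r := by
  classical
  obtain ⟨c, hc0, hc1, hcb⟩ := exists_c hpos hg hg0
  set d := gdeg ρ g with hd
  set Mg := Gn ρ g with hMgdef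
  have hMgpos : 0 < Mg := Gn_pos hpos hg hg0
  have hstep := step hpos hmul hg hg0 hc0 hc1 hcb
  choose Qf Rf hQmem hRmem hRdeg hQb hRb hFb using hstep
  -- the iteration
  set T : {h : PowerSeries E // Mem ρ h} → {h : PowerSeries E // Mem ρ h} :=
    fun x => ⟨x.1 - Qf x.1 x.2 * g - Rf x.1 x.2,
      Mem_sub ρ hpos (Mem_sub ρ hpos x.2 (Mem.mul ρ hpos hmul (hQmem x.1 x.2) hg))
        (hRmem x.1 x.2)⟩ with hT
  set s : ℕ → {h : PowerSeries E // Mem ρ h} := fun m => T^[m] ⟨f, hf⟩ with hs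
  have hs0 : s 0 = ⟨f, hf⟩ := rfl
  have hssucc : ∀ m, s (m + 1) = T (s m) := by
    intro m
    rw [hs]
    exact Function.iterate_succ_apply' T m _
  set Fq : ℕ → PowerSeries E := fun m => Qf (s m).1 (s m).2 with hFq
  set Fr : ℕ → PowerSeries E := fun m => Rf (s m).1 (s m).2 with hFr
  have hFsucc : ∀ m, (s (m + 1)).1 = (s m).1 - Fq m * g - Fr m := by
    intro m
    rw [hssucc m, hT]
  -- geometric decay
  have hGnsucc : ∀ m, Gn ρ (s (m + 1)).1 ≤ c * Gn ρ (s m).1 := by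
    intro m
    rw [hFsucc m]
    refine Gn_le hpos (mul_nonneg hc0.le (Gn_nonneg hpos _)) ?_
    exact hFb (s m).1 (s m).2
  have hGnm : ∀ m, Gn ρ (s m).1 ≤ c ^ m * Gn ρ f := by
    intro m
    induction m with
    | zero => rw [hs0, pow_zero, one_mul]
    | succ m ih =>
      calc Gn ρ (s (m + 1)).1 ≤ c * Gn ρ (s m).1 := hGnsucc m
        _ ≤ c * (c ^ m * Gn ρ f) := mul_le_mul_of_nonneg_left ih hc0.le
        _ = c ^ (m + 1) * Gn ρ f := by ring
  -- coefficient bounds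
  have hqk : ∀ m k, ‖(PowerSeries.coeff (R := E) k) (Fq m)‖ ≤ c ^ m * (Gn ρ f / (Mg * ρ k)) := by
    intro m k
    have h1 : W ρ (Fq m) k * Mg ≤ Gn ρ (s m).1 := hQb (s m).1 (s m).2 k
    have h2 : W ρ (Fq m) k * Mg ≤ c ^ m * Gn ρ f := le_trans h1 (hGnm m)
    rw [W] at h2
    rw [← mul_div_assoc, le_div_iff₀ (mul_pos hMgpos (hpos k))]
    calc ‖(PowerSeries.coeff (R := E) k) (Fq m)‖ * (Mg * ρ k)
        = ‖(PowerSeries.coeff (R := E) k) (Fq m)‖ * ρ k * Mg := by ring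
      _ ≤ c ^ m * Gn ρ f := h2
  have hrk : ∀ m k, ‖(PowerSeries.coeff (R := E) k) (Fr m)‖ ≤ c ^ m * (Gn ρ f / ρ k) := by
    intro m k
    have h1 : W ρ (Fr m) k ≤ Gn ρ (s m).1 := hRb (s m).1 (s m).2 k
    have h2 : W ρ (Fr m) k ≤ c ^ m * Gn ρ f := le_trans h1 (hGnm m)
    rw [W] at h2
    rw [← mul_div_assoc, le_div_iff₀ (hpos k)]
    exact h2
  have hgeo : Summable (fun m : ℕ => c ^ m) := summable_geometric_of_lt_one hc0.le hc1
  have hsumq : ∀ k, Summable (fun m => (PowerSeries.coeff (R := E) k) (Fq m)) := by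
    intro k
    refine Summable.of_norm (Summable.of_nonneg_of_le (fun m => norm_nonneg _)
      (fun m => hqk m k) ?_)
    exact hgeo.mul_right _
  have hsumr : ∀ k, Summable (fun m => (PowerSeries.coeff (R := E) k) (Fr m)) := by
    intro k
    refine Summable.of_norm (Summable.of_nonneg_of_le (fun m => norm_nonneg _)
      (fun m => hrk m k) ?_)
    exact hgeo.mul_right _
  set Q : PowerSeries E := PowerSeries.mk fun k => ∑' m, (PowerSeries.coeff (R := E) k) (Fq m) with hQ
  set R : PowerSeries E := PowerSeries.mk fun k => ∑' m, (PowerSeries.coeff (R := E) k) (Fr m) with hR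
  have hQcoeff : ∀ k, (PowerSeries.coeff (R := E) k) Q = ∑' m, (PowerSeries.coeff (R := E) k) (Fq m) :=
    fun k => PowerSeries.coeff_mk k _
  have hRcoeff : ∀ k, (PowerSeries.coeff (R := E) k) R = ∑' m, (PowerSeries.coeff (R := E) k) (Fr m) :=
    fun k => PowerSeries.coeff_mk k _
  -- R has controlled degree
  have hRdeg' : ∀ k, d ≤ k → (PowerSeries.coeff (R := E) k) R = 0 := by
    intro k hk
    rw [hRcoeff]
    have : (fun m => (PowerSeries.coeff (R := E) k) (Fr m)) = fun _ => (0 : E) := by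
      funext m
      exact hRdeg (s m).1 (s m).2 k hk
    rw [this, tsum_zero]
  -- R is in the ring
  have hRmem' : Mem ρ R := by
    refine Tendsto.congr' ?_ (tendsto_const_nhds : Tendsto (fun _ : ℕ => (0:ℝ)) atTop (nhds 0))
    filter_upwards [eventually_ge_atTop d] with k hk
    rw [W, hRdeg' k hk]
    simp
  -- Q is in the ring
  have hQmem' : Mem ρ Q := by
    rw [Mem, Metric.tendsto_atTop]
    intro ε hε
    obtain ⟨M, hM⟩ : ∃ M : ℕ, c ^ M * (Gn ρ f / Mg) < ε := by
      have h1 : Tendsto (fun M : ℕ => c ^ M * (Gn ρ f / Mg)) atTop (nhds 0) := by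
        have := (tendsto_pow_atTop_nhds_zero_of_lt_one hc0.le hc1).mul_const (Gn ρ f / Mg)
        rwa [zero_mul] at this
      exact ((h1.eventually_lt_const hε).exists)
    have hhead : ∀ᶠ k in atTop, ∀ m ∈ Finset.range M, W ρ (Fq m) k < ε := by
      rw [eventually_all_finset]
      intro m _
      exact Mem_eventually_lt ρ hpos (hQmem (s m).1 (s m).2) hε
    rw [← eventually_atTop]
    filter_upwards [hhead] with k hk
    have htail : ‖∑' m, (PowerSeries.coeff (R := E) k) (Fq (m + M))‖
        ≤ c ^ M * (Gn ρ f / (Mg * ρ k)) := by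
      refine IsUltrametricDist.norm_tsum_le_of_forall_le_of_nonneg ?_ ?_
      · exact mul_nonneg (pow_nonneg hc0.le M)
          (div_nonneg (Gn_nonneg hpos f) (mul_pos hMgpos (hpos k)).le)
      · intro m
        calc ‖(PowerSeries.coeff (R := E) k) (Fq (m + M))‖
            ≤ c ^ (m + M) * (Gn ρ f / (Mg * ρ k)) := hqk (m + M) k
          _ ≤ c ^ M * (Gn ρ f / (Mg * ρ k)) := by
              refine mul_le_mul_of_nonneg_right ?_
                (div_nonneg (Gn_nonneg hpos f) (mul_pos hMgpos (hpos k)).le)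
              calc c ^ (m + M) = c ^ m * c ^ M := pow_add c m M
                _ ≤ 1 * c ^ M := mul_le_mul_of_nonneg_right
                    (pow_le_one₀ hc0.le hc1.le) (pow_nonneg hc0.le M)
                _ = c ^ M := one_mul _
    have hsplit : (PowerSeries.coeff (R := E) k) Q
        = (∑ m ∈ Finset.range M, (PowerSeries.coeff (R := E) k) (Fq m))
          + ∑' m, (PowerSeries.coeff (R := E) k) (Fq (m + M)) := by
      rw [hQcoeff, ← Summable.sum_add_tsum_nat_add M (hsumq k)]
    have hWQ : W ρ Q k < ε := by
      rw [W, hsplit]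
      calc ‖(∑ m ∈ Finset.range M, (PowerSeries.coeff (R := E) k) (Fq m))
            + ∑' m, (PowerSeries.coeff (R := E) k) (Fq (m + M))‖ * ρ k
          ≤ max ‖∑ m ∈ Finset.range M, (PowerSeries.coeff (R := E) k) (Fq m)‖
              ‖∑' m, (PowerSeries.coeff (R := E) k) (Fq (m + M))‖ * ρ k :=
            mul_le_mul_of_nonneg_right (IsUltrametricDist.norm_add_le_max _ _) (hpos k).le
        _ = max (‖∑ m ∈ Finset.range M, (PowerSeries.coeff (R := E) k) (Fq m)‖ * ρ k)
              (‖∑' m, (PowerSeries.coeff (R := E) k) (Fq (m + M))‖ * ρ k) :=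
            max_mul_of_nonneg _ _ (hpos k).le
        _ < ε := by
            refine max_lt ?_ ?_
            · rcases Nat.eq_zero_or_pos M with hM0 | hM0
              · subst hM0
                simp only [Finset.range_zero, Finset.sum_empty, norm_zero, zero_mul]
                exact hε
              · have h1 : ‖∑ m ∈ Finset.range M, (PowerSeries.coeff (R := E) k) (Fq m)‖
                    < ε / ρ k := by
                  refine norm_sum_lt (div_pos hε (hpos k)) ?_
                  intro m hm
                  rw [lt_div_iff₀ (hpos k)]
                  exact hk m hm
                calc ‖∑ m ∈ Finset.range M, (PowerSeries.coeff (R := E) k) (Fq m)‖ * ρ k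
                    < (ε / ρ k) * ρ k := mul_lt_mul_of_pos_right h1 (hpos k)
                  _ = ε := div_mul_cancel₀ _ (hpos k).ne'
            · calc ‖∑' m, (PowerSeries.coeff (R := E) k) (Fq (m + M))‖ * ρ k
                  ≤ c ^ M * (Gn ρ f / (Mg * ρ k)) * ρ k :=
                    mul_le_mul_of_nonneg_right htail (hpos k).le
                _ = c ^ M * (Gn ρ f / Mg) := by
                    rw [mul_assoc]
                    congr 1
                    rw [div_mul_eq_mul_div, mul_comm Mg (ρ k), ← div_div,
                      mul_div_assoc, div_self (hpos k).ne', mul_one]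
                _ < ε := hM
    rwa [Real.dist_eq, sub_zero, abs_of_nonneg (W_nonneg ρ hpos Q k)]
  -- telescoping identity
  have htel : ∀ M, (s M).1
      = f - (∑ m ∈ Finset.range M, Fq m) * g - ∑ m ∈ Finset.range M, Fr m := by
    intro M
    induction M with
    | zero => simp [hs0]
    | succ M ih =>
      rw [hFsucc M, ih, Finset.sum_range_succ, Finset.sum_range_succ, add_mul]
      ring
  -- the division identity, coefficientwise
  have hzero : ∀ k, (PowerSeries.coeff (R := E) k) (f - Q * g - R) = 0 := by
    intro k
    have h1 : Tendsto (fun M => (PowerSeries.coeff (R := E) k) ((s M).1)) atTop (nhds 0) := by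
      have hbnd : ∀ M, ‖(PowerSeries.coeff (R := E) k) ((s M).1)‖ ≤ c ^ M * (Gn ρ f / ρ k) := by
        intro M
        have hb : W ρ ((s M).1) k ≤ c ^ M * Gn ρ f :=
          le_trans (W_le_Gn hpos (s M).2 k) (hGnm M)
        rw [W] at hb
        rw [← mul_div_assoc, le_div_iff₀ (hpos k)]
        exact hb
      refine squeeze_zero_norm hbnd ?_
      have := (tendsto_pow_atTop_nhds_zero_of_lt_one hc0.le hc1).mul_const (Gn ρ f / ρ k)
      rwa [zero_mul] at this
    have h2 : Tendsto (fun M => (PowerSeries.coeff (R := E) k) ((s M).1)) atTop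
        (nhds ((PowerSeries.coeff (R := E) k) (f - Q * g - R))) := by
      have hQg : Tendsto (fun M => (PowerSeries.coeff (R := E) k)
          ((∑ m ∈ Finset.range M, Fq m) * g)) atTop
          (nhds ((PowerSeries.coeff (R := E) k) (Q * g))) := by
        have hform : ∀ M, (PowerSeries.coeff (R := E) k) ((∑ m ∈ Finset.range M, Fq m) * g)
            = ∑ p ∈ Finset.HasAntidiagonal.antidiagonal k,
                (∑ m ∈ Finset.range M, (PowerSeries.coeff (R := E) p.1) (Fq m))
                  * (PowerSeries.coeff (R := E) p.2) g := by
          intro M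
          rw [PowerSeries.coeff_mul]
          refine Finset.sum_congr rfl fun p _ => ?_
          rw [map_sum]
        have hform' : (PowerSeries.coeff (R := E) k) (Q * g)
            = ∑ p ∈ Finset.HasAntidiagonal.antidiagonal k,
                (∑' m, (PowerSeries.coeff (R := E) p.1) (Fq m)) * (PowerSeries.coeff (R := E) p.2) g := by
          rw [PowerSeries.coeff_mul]
          refine Finset.sum_congr rfl fun p _ => ?_
          rw [hQcoeff]
        rw [hform']
        have := fun M => (hform M).symm
        refine Tendsto.congr (fun M => (hform M).symm) ?_
        refine tendsto_finset_sum _ fun p _ => ?_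
        exact ((hsumq p.1).hasSum.tendsto_sum_nat).mul_const _
      have hRt : Tendsto (fun M => (PowerSeries.coeff (R := E) k)
          (∑ m ∈ Finset.range M, Fr m)) atTop (nhds ((PowerSeries.coeff (R := E) k) R)) := by
        rw [hRcoeff]
        refine Tendsto.congr (fun M => ?_) ((hsumr k).hasSum.tendsto_sum_nat)
        rw [map_sum]
      have hcomb : Tendsto (fun M => (PowerSeries.coeff (R := E) k) f
          - (PowerSeries.coeff (R := E) k) ((∑ m ∈ Finset.range M, Fq m) * g)
          - (PowerSeries.coeff (R := E) k) (∑ m ∈ Finset.range M, Fr m)) atTop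
          (nhds ((PowerSeries.coeff (R := E) k) f - (PowerSeries.coeff (R := E) k) (Q * g)
            - (PowerSeries.coeff (R := E) k) R)) :=
        (tendsto_const_nhds.sub hQg).sub hRt
      have heq : ∀ M, (PowerSeries.coeff (R := E) k) ((s M).1)
          = (PowerSeries.coeff (R := E) k) f
            - (PowerSeries.coeff (R := E) k) ((∑ m ∈ Finset.range M, Fq m) * g)
            - (PowerSeries.coeff (R := E) k) (∑ m ∈ Finset.range M, Fr m) := by
        intro M
        rw [htel M, map_sub, map_sub]
      have heq' : (PowerSeries.coeff (R := E) k) (f - Q * g - R)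
          = (PowerSeries.coeff (R := E) k) f - (PowerSeries.coeff (R := E) k) (Q * g)
            - (PowerSeries.coeff (R := E) k) R := by
        rw [map_sub, map_sub]
      rw [heq']
      exact Tendsto.congr (fun M => (heq M).symm) hcomb
    exact tendsto_nhds_unique h2 h1
  refine ⟨Q, R, hQmem', hRmem', hRdeg', ?_⟩
  have : f - Q * g - R = 0 := PowerSeries.ext fun k => by
    rw [hzero k, map_zero]
  have h2 : f - (Q * g + R) = 0 := by rw [← this]; ring
  have h3 := sub_eq_zero.mp h2
  exact h3

end division

section remlt

variable {ρ}

include hpos in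
lemma gdeg_lt_of_coeff_zero {r : PowerSeries E} (hr : Mem ρ r) (hr0 : r ≠ 0)
    {d : ℕ} (h : ∀ k, d ≤ k → (PowerSeries.coeff (R := E) k) r = 0) : gdeg ρ r < d := by
  by_contra hcon
  push_neg at hcon
  have h1 := gdeg_pos hpos hr hr0
  have h2 : W ρ r (gdeg ρ r) = 0 := (W_eq_zero_iff ρ hpos).mpr (h _ hcon)
  rw [h2] at h1
  exact absurd h1 (lt_irrefl _)

end remlt

end Laz

end Lazard

/-- **(Lazard.)**  For every `n ≥ 1`, the ring `ℋₙ` of rigid analytic functions on the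
closed disc of radius `p^{-1/n}` is a Euclidean ring (for a Euclidean structure compatible
with its ring structure); in particular it is an integral domain in which every ideal is
principal, i.e. a principal ideal domain. -/
theorem Hn_euclideanDomain_and_isPrincipalIdealRing
    (p : ℕ) [Fact (Nat.Prime p)]
    (E : Type) [NormedField E] [IsUltrametricDist E]
    [NormedAlgebra ℚ_[p] E] [FiniteDimensional ℚ_[p] E]
    (hnorm : ∀ x : ℚ_[p], ‖algebraMap ℚ_[p] E x‖ = ‖x‖)
    (hp : ‖(p : E)‖ = (p : ℝ)⁻¹)
    (n : ℕ) (hn : 1 ≤ n) :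
    (∃ ed : EuclideanDomain ↥(Hn p E n),
        ed.toCommRing = (inferInstance : CommRing ↥(Hn p E n))) ∧
      IsDomain ↥(Hn p E n) ∧ IsPrincipalIdealRing ↥(Hn p E n) := by
  classical
  haveI : CompleteSpace E := FiniteDimensional.complete ℚ_[p] E
  set ρ : ℕ → ℝ := fun k => (p : ℝ) ^ (-(k : ℝ) / (n : ℝ)) with hρ
  have hp0 : (0 : ℝ) < (p : ℝ) := by
    exact_mod_cast (Fact.out : Nat.Prime p).pos
  have hpos : ∀ k, 0 < ρ k := fun k => Real.rpow_pos_of_pos hp0 _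
  have hmul : ∀ i j : ℕ, ρ i * ρ j = ρ (i + j) := by
    intro i j
    show (p : ℝ) ^ (-(i : ℝ) / (n : ℝ)) * (p : ℝ) ^ (-(j : ℝ) / (n : ℝ))
      = (p : ℝ) ^ (-((i + j : ℕ) : ℝ) / (n : ℝ))
    rw [← Real.rpow_add hp0]
    congr 1
    push_cast
    ring
  have hmem : ∀ f : PowerSeries E, f ∈ Hn p E n ↔ Laz.Mem ρ f := fun f => Iff.rfl
  -- the Euclidean "size" function
  let D : ↥(Hn p E n) → WithBot ℕ := fun x =>
    if (x : PowerSeries E) = 0 then ⊥ else ((Laz.gdeg ρ (x : PowerSeries E) : ℕ) : WithBot ℕ)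
  have main : ∀ x y : ↥(Hn p E n), y ≠ 0 → ∃ q : ↥(Hn p E n), D (x - y * q) < D y := by
    intro x y hy
    have hy0 : (y : PowerSeries E) ≠ 0 := by
      intro h
      exact hy (Subtype.ext h)
    obtain ⟨q, r, hqmem, hrmem, hrdeg, heq⟩ :=
      Laz.division ρ hpos hmul ((hmem _).mp y.2) hy0 (x : PowerSeries E) ((hmem _).mp x.2)
    refine ⟨⟨q, (hmem q).mpr hqmem⟩, ?_⟩
    have hval : ((x - y * (⟨q, (hmem q).mpr hqmem⟩ : ↥(Hn p E n)) : ↥(Hn p E n))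
        : PowerSeries E) = r := by
      push_cast
      rw [heq]
      ring
    have hDy : D y = ((Laz.gdeg ρ (y : PowerSeries E) : ℕ) : WithBot ℕ) := if_neg hy0
    by_cases hr0 : r = 0
    · have : D (x - y * (⟨q, (hmem q).mpr hqmem⟩ : ↥(Hn p E n))) = ⊥ := by
        simp only [D]
        rw [if_pos (by rw [hval]; exact hr0)]
      rw [this, hDy]
      exact WithBot.bot_lt_coe _
    · have : D (x - y * (⟨q, (hmem q).mpr hqmem⟩ : ↥(Hn p E n)))
          = ((Laz.gdeg ρ r : ℕ) : WithBot ℕ) := by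
        simp only [D]
        rw [if_neg (by rw [hval]; exact hr0), hval]
      rw [this, hDy]
      have hlt : Laz.gdeg ρ r < Laz.gdeg ρ (y : PowerSeries E) :=
        Laz.gdeg_lt_of_coeff_zero hpos hrmem hr0 hrdeg
      exact_mod_cast hlt
  let quot : ↥(Hn p E n) → ↥(Hn p E n) → ↥(Hn p E n) := fun x y =>
    if h : y = 0 then 0 else Classical.choose (main x y h)
  have hquot : ∀ x y, y ≠ 0 → D (x - y * quot x y) < D y := by
    intro x y h
    have : quot x y = Classical.choose (main x y h) := dif_neg h
    rw [this]
    exact Classical.choose_spec (main x y h)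
  have hquot0 : ∀ a, quot a 0 = 0 := fun a => dif_pos rfl
  have hmulnot : ∀ (a : ↥(Hn p E n)) {b : ↥(Hn p E n)}, b ≠ 0 → ¬ D (a * b) < D a := by
    intro a b hb
    by_cases ha : a = 0
    · subst ha
      rw [zero_mul]
      exact lt_irrefl _
    · have ha0 : (a : PowerSeries E) ≠ 0 := fun h => ha (Subtype.ext h)
      have hb0 : (b : PowerSeries E) ≠ 0 := fun h => hb (Subtype.ext h)
      have hab : ((a * b : ↥(Hn p E n)) : PowerSeries E) = (a : PowerSeries E) * (b : PowerSeries E) := rfl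
      have hab0 : (a : PowerSeries E) * (b : PowerSeries E) ≠ 0 := mul_ne_zero ha0 hb0
      obtain ⟨_, _, hgd⟩ := Laz.gdeg_mul ρ hpos hmul ((hmem _).mp a.2) ((hmem _).mp b.2) ha0 hb0
      have hDab : D (a * b) = ((Laz.gdeg ρ ((a : PowerSeries E) * (b : PowerSeries E)) : ℕ) : WithBot ℕ) := by
        simp only [D, hab]
        rw [if_neg hab0]
      have hDa : D a = ((Laz.gdeg ρ (a : PowerSeries E) : ℕ) : WithBot ℕ) := if_neg ha0
      rw [hDab, hDa, hgd]
      refine not_lt.mpr ?_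
      exact_mod_cast Nat.le_add_right _ _
  let ed : EuclideanDomain ↥(Hn p E n) :=
    { (inferInstance : CommRing ↥(Hn p E n)),
      (inferInstance : Nontrivial ↥(Hn p E n)) with
      quotient := quot
      quotient_zero := hquot0
      remainder := fun a b => a - b * quot a b
      quotient_mul_add_remainder_eq := fun a b => by ring
      r := fun x y => D x < D y
      r_wellFounded := InvImage.wf D wellFounded_lt
      remainder_lt := fun a b hb => hquot a b hb
      mul_left_not_lt := hmulnot }
  refine ⟨⟨ed, rfl⟩, inferInstance, ?_⟩
  letI := ed
  exact EuclideanDomain.to_principal_ideal_domain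
end
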